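/- arXiv:2502.17018 — 2 statements merged into one kernel-verified Lean document; each statement's English description precedes it below -/
import Mathlib

section
/- Let A be the commutative Banach algebra ℓ¹(S) of summable functions on the semigroup S = {n ∈ ℤ^∞ : τ(n) ≥ 0} with convolution product. Every multiplicative linear functional on A is of the form f ↦ ∑_{n∈S} f(n)·z^n, where z^n = ∏_k (p_k^{−σ} λ_k)^{n_k} for some σ ∈ [0, ∞] and λ ∈ 𝕋^ω (with z^n = 0 for n ≠ 0 when σ = ∞), and conversely each such formula defines a multiplicative functional. -/
/-- `τ(n) = ∑ₖ nₖ · log pₖ`, where `pₖ` is the `k`-th prime. -/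
noncomputable def tau (n : ℕ →₀ ℤ) : ℝ :=
  n.sum fun k m => (m : ℝ) * Real.log (Nat.nth Nat.Prime k)

/-- Membership in `ℓ¹(S)`, `S = {n ∈ ℤ^∞ : τ(n) ≥ 0}`: absolutely summable functions on
`ℤ^∞` supported on the positive cone `S`. -/
def MemL1S (f : (ℕ →₀ ℤ) → ℂ) : Prop :=
  Summable (fun n => ‖f n‖) ∧ ∀ n, tau n < 0 → f n = 0

/-- Convolution product on `ℓ¹(S)`: `(f∗g)(n) = ∑_{m} f(m) g(n−m)`. -/
noncomputable def conv (f g : (ℕ →₀ ℤ) → ℂ) : (ℕ →₀ ℤ) → ℂ :=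
  fun n => ∑' m : ℕ →₀ ℤ, f m * g (n - m)

/-- The character `n ↦ z^n = ∏ₖ (pₖ^{−σ} λₖ)^{nₖ}` attached to `σ ∈ [0,∞]` and `λ ∈ 𝕋^ω`
(for `σ = ∞`: `z^n = 0` for `n ≠ 0`, `z^0 = 1`). -/
noncomputable def charZ (σ : ENNReal) (lam : ℕ → Circle) (n : ℕ →₀ ℤ) : ℂ :=
  if σ = ⊤ then (if n = 0 then 1 else 0)
  else ∏ k ∈ n.support,
    ((((Nat.nth Nat.Prime k : ℝ) ^ (-σ.toReal) : ℝ) : ℂ) * (lam k : ℂ)) ^ (n k)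

lemma pk_prime (k : ℕ) : Nat.Prime (Nat.nth Nat.Prime k) := Nat.prime_nth_prime k

lemma pk_injective : Function.Injective (Nat.nth Nat.Prime) :=
  (Nat.nth_strictMono Nat.infinite_setOf_prime).injective

lemma pk_pos (k : ℕ) : (0:ℝ) < (Nat.nth Nat.Prime k : ℝ) := by
  exact_mod_cast (pk_prime k).pos

lemma log_pk_pos (k : ℕ) : 0 < Real.log (Nat.nth Nat.Prime k) := by
  apply Real.log_pos
  exact_mod_cast (pk_prime k).one_lt

lemma tau_eq_sum (n : ℕ →₀ ℤ) (s : Finset ℕ) (hs : n.support ⊆ s) :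
    tau n = ∑ k ∈ s, (n k : ℝ) * Real.log (Nat.nth Nat.Prime k) := by
  rw [tau, Finsupp.sum]
  refine Finset.sum_subset hs (fun k _ hk => ?_)
  simp [Finsupp.notMem_support_iff.mp hk]

lemma tau_add (n m : ℕ →₀ ℤ) : tau (n + m) = tau n + tau m := by
  rw [tau_eq_sum (n+m) (n.support ∪ m.support) Finsupp.support_add,
    tau_eq_sum n (n.support ∪ m.support) (Finset.subset_union_left),
    tau_eq_sum m (n.support ∪ m.support) (Finset.subset_union_right), ← Finset.sum_add_distrib]
  refine Finset.sum_congr rfl fun k _ => ?_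
  push_cast [Finsupp.add_apply]
  ring

lemma tau_zero : tau 0 = 0 := by simp [tau]

lemma tau_neg (n : ℕ →₀ ℤ) : tau (-n) = - tau n := by
  have := tau_add n (-n); simp [tau_zero] at this; linarith

lemma tau_sub (n m : ℕ →₀ ℤ) : tau (n - m) = tau n - tau m := by
  rw [sub_eq_add_neg, tau_add, tau_neg]; ring

lemma tau_nsmul (M : ℕ) (n : ℕ →₀ ℤ) : tau (M • n) = M * tau n := by
  induction M with
  | zero => simp [tau_zero]
  | succ M ih => rw [succ_nsmul, tau_add, ih]; push_cast; ring

lemma tau_nonneg_of_nonneg {n : ℕ →₀ ℤ} (h : ∀ k, 0 ≤ n k) : 0 ≤ tau n := by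
  rw [tau, Finsupp.sum]
  refine Finset.sum_nonneg fun k _ => mul_nonneg ?_ (log_pk_pos k).le
  exact_mod_cast h k

lemma tau_single (k : ℕ) (a : ℤ) : tau (Finsupp.single k a) = a * Real.log (Nat.nth Nat.Prime k) := by
  rw [tau, Finsupp.sum_single_index]; simp

lemma pk_two_le (k : ℕ) : 2 ≤ Nat.nth Nat.Prime k := (pk_prime k).two_le

lemma fact_prod_pow (s : Finset ℕ) (e : ℕ → ℕ) (j : ℕ) (hj : j ∈ s) :
    (∏ k ∈ s, (Nat.nth Nat.Prime k)^(e k)).factorization (Nat.nth Nat.Prime j) = e j := by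
  rw [Nat.factorization_prod (fun k _ => pow_ne_zero _ (pk_prime k).ne_zero)]
  rw [Finset.sum_apply']
  rw [Finset.sum_eq_single j]
  · rw [(pk_prime j).factorization_pow, Finsupp.single_apply, if_pos rfl]
  · intro k _ hk
    rw [(pk_prime k).factorization_pow, Finsupp.single_apply,
      if_neg (fun h => hk (pk_injective h))]
  · exact fun h => absurd hj h

lemma log_prod_pow (s : Finset ℕ) (e : ℕ → ℕ) :
    Real.log (∏ k ∈ s, (Nat.nth Nat.Prime k)^(e k) : ℕ) =
      ∑ k ∈ s, (e k : ℝ) * Real.log (Nat.nth Nat.Prime k) := by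
  push_cast
  rw [Real.log_prod (fun k _ => pow_ne_zero _ (pk_pos k).ne')]
  refine Finset.sum_congr rfl fun k _ => ?_
  rw [Real.log_pow]

lemma tau_eq_zero_imp {n : ℕ →₀ ℤ} (h : tau n = 0) : n = 0 := by
  set a : ℕ := ∏ k ∈ n.support, (Nat.nth Nat.Prime k)^((n k).toNat) with ha
  set b : ℕ := ∏ k ∈ n.support, (Nat.nth Nat.Prime k)^((-(n k)).toNat) with hb
  have key : Real.log a - Real.log b = tau n := by
    rw [ha, hb, log_prod_pow, log_prod_pow, ← Finset.sum_sub_distrib, tau, Finsupp.sum]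
    refine Finset.sum_congr rfl fun k _ => ?_
    have h0 : ((n k).toNat : ℤ) - (((-(n k)).toNat : ℤ)) = n k := by omega
    have h1 : ((n k).toNat : ℝ) - ((-(n k)).toNat : ℝ) = (n k : ℝ) := by
      have := congrArg (fun z : ℤ => (z : ℝ)) h0
      push_cast at this
      exact this
    rw [← h1]; ring
  have hab : Real.log a = Real.log b := by rw [← sub_eq_zero, key, h]
  have hapos : 0 < a := Finset.prod_pos fun k _ => pow_pos (pk_prime k).pos _
  have hbpos : 0 < b := Finset.prod_pos fun k _ => pow_pos (pk_prime k).pos _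
  have hab' : a = b := by
    have := Real.log_injOn_pos (Set.mem_Ioi.mpr (by exact_mod_cast hapos))
      (Set.mem_Ioi.mpr (by exact_mod_cast hbpos)) hab
    exact_mod_cast this
  ext j
  rw [Finsupp.coe_zero, Pi.zero_apply]
  by_cases hj : j ∈ n.support
  · have h1 := fact_prod_pow n.support (fun k => (n k).toNat) j hj
    have h2 := fact_prod_pow n.support (fun k => (-(n k)).toNat) j hj
    have h3 : (n j).toNat = ((-(n j)).toNat) := by
      rw [← h1, ← h2, ← ha, ← hb, hab']
    omega
  · simpa using Finsupp.notMem_support_iff.mp hj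

/-- Product of `w k ^ n k` over any superset of the support. -/
lemma prodpow_sup (w : ℕ → ℂ) (n : ℕ →₀ ℤ) (s : Finset ℕ) (hs : n.support ⊆ s) :
    ∏ k ∈ n.support, w k ^ (n k) = ∏ k ∈ s, w k ^ (n k) := by
  refine Finset.prod_subset hs fun k _ hk => ?_
  rw [Finsupp.notMem_support_iff.mp hk, zpow_zero]

lemma prodpow_add (w : ℕ → ℂ) (hw : ∀ k, w k ≠ 0) (n m : ℕ →₀ ℤ) :
    ∏ k ∈ (n+m).support, w k ^ ((n+m) k) =
      (∏ k ∈ n.support, w k ^ (n k)) * (∏ k ∈ m.support, w k ^ (m k)) := by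
  rw [prodpow_sup w (n+m) (n.support ∪ m.support) Finsupp.support_add,
    prodpow_sup w n (n.support ∪ m.support) Finset.subset_union_left,
    prodpow_sup w m (n.support ∪ m.support) Finset.subset_union_right,
    ← Finset.prod_mul_distrib]
  refine Finset.prod_congr rfl fun k _ => ?_
  rw [Finsupp.add_apply, zpow_add₀ (hw k)]

/-- the weight `w` for finite `σ` -/
noncomputable def wgt (σ : ENNReal) (lam : ℕ → Circle) (k : ℕ) : ℂ :=
  (((Nat.nth Nat.Prime k : ℝ) ^ (-σ.toReal) : ℝ) : ℂ) * (lam k : ℂ)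

lemma wgt_ne_zero (σ : ENNReal) (lam : ℕ → Circle) (k : ℕ) : wgt σ lam k ≠ 0 := by
  apply mul_ne_zero
  · exact_mod_cast (Real.rpow_pos_of_pos (pk_pos k) _).ne'
  · exact Circle.coe_ne_zero _

lemma norm_wgt (σ : ENNReal) (lam : ℕ → Circle) (k : ℕ) :
    ‖wgt σ lam k‖ = (Nat.nth Nat.Prime k : ℝ) ^ (-σ.toReal) := by
  rw [wgt, norm_mul]
  have h1 : ‖((((Nat.nth Nat.Prime k : ℝ) ^ (-σ.toReal) : ℝ)) : ℂ)‖ =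
      (Nat.nth Nat.Prime k : ℝ) ^ (-σ.toReal) := by
    rw [Complex.norm_real, Real.norm_eq_abs, abs_of_pos (Real.rpow_pos_of_pos (pk_pos k) _)]
  have h2 : ‖(lam k : ℂ)‖ = 1 := by exact Circle.norm_coe _
  rw [h1, h2, mul_one]

lemma charZ_of_ne_top (σ : ENNReal) (hσ : σ ≠ ⊤) (lam : ℕ → Circle) (n : ℕ →₀ ℤ) :
    charZ σ lam n = ∏ k ∈ n.support, (wgt σ lam k) ^ (n k) := by
  rw [charZ, if_neg hσ]; rfl

lemma charZ_mul (σ : ENNReal) (hσ : σ ≠ ⊤) (lam : ℕ → Circle) (n m : ℕ →₀ ℤ) :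
    charZ σ lam (n + m) = charZ σ lam n * charZ σ lam m := by
  rw [charZ_of_ne_top σ hσ, charZ_of_ne_top σ hσ, charZ_of_ne_top σ hσ,
    prodpow_add _ (wgt_ne_zero σ lam) n m]

lemma norm_charZ (σ : ENNReal) (hσ : σ ≠ ⊤) (lam : ℕ → Circle) (n : ℕ →₀ ℤ) :
    ‖charZ σ lam n‖ = Real.exp (-(σ.toReal) * tau n) := by
  rw [charZ_of_ne_top σ hσ, norm_prod]
  have : ∀ k ∈ n.support, ‖wgt σ lam k ^ (n k)‖ =
      Real.exp (-(σ.toReal) * ((n k : ℝ) * Real.log (Nat.nth Nat.Prime k))) := by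
    intro k _
    rw [norm_zpow, norm_wgt, Real.rpow_def_of_pos (pk_pos k),
      ← Real.rpow_intCast, Real.rpow_def_of_pos (Real.exp_pos _), Real.log_exp]
    ring_nf
  rw [Finset.prod_congr rfl this, ← Real.exp_sum]
  congr 1
  rw [tau_eq_sum n n.support subset_rfl, Finset.mul_sum]

lemma norm_charZ_le_one (σ : ENNReal) (lam : ℕ → Circle) {n : ℕ →₀ ℤ} (hn : 0 ≤ tau n) :
    ‖charZ σ lam n‖ ≤ 1 := by
  by_cases hσ : σ = ⊤
  · rw [charZ, if_pos hσ]
    split <;> simp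
  · rw [norm_charZ σ hσ, Real.exp_le_one_iff]
    have := ENNReal.toReal_nonneg (a := σ)
    nlinarith

section Conv
variable {f g : (ℕ →₀ ℤ) → ℂ} (hf : MemL1S f) (hg : MemL1S g)
  (σ : ENNReal) (lam : ℕ → Circle)

lemma memS_of_ne_zero {f : (ℕ →₀ ℤ) → ℂ} (hf : MemL1S f) {n : ℕ →₀ ℤ} (h : f n ≠ 0) :
    0 ≤ tau n := not_lt.mp (fun hlt => h (hf.2 n hlt))

/-- the shear equivalence `(m,u) ↦ (u+m, m)` -/
noncomputable def shear : ((ℕ →₀ ℤ) × (ℕ →₀ ℤ)) ≃ ((ℕ →₀ ℤ) × (ℕ →₀ ℤ)) where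
  toFun p := (p.2 + p.1, p.1)
  invFun q := (q.2, q.1 - q.2)
  left_inv p := by simp
  right_inv q := by simp

include hf hg in
lemma summable_norm_shear : Summable fun q : (ℕ →₀ ℤ) × (ℕ →₀ ℤ) =>
    ‖f q.2 * g (q.1 - q.2)‖ := by
  rw [← shear.summable_iff]
  have : ((fun q : (ℕ →₀ ℤ) × (ℕ →₀ ℤ) => ‖f q.2 * g (q.1 - q.2)‖) ∘ shear) =
      fun p : (ℕ →₀ ℤ) × (ℕ →₀ ℤ) => ‖f p.1 * g p.2‖ := by
    funext p
    simp [shear]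
  rw [this]
  exact hf.1.mul_norm hg.1

include hf hg in
lemma inner_summable (n : ℕ →₀ ℤ) : Summable fun m => ‖f m * g (n - m)‖ := by
  have := (summable_prod_of_nonneg (f := fun q : (ℕ →₀ ℤ) × (ℕ →₀ ℤ) =>
    ‖f q.2 * g (q.1 - q.2)‖) (fun q => norm_nonneg _)).mp (summable_norm_shear hf hg)
  exact this.1 n

include hf hg in
lemma memL1S_conv : MemL1S (conv f g) := by
  constructor
  · have hsum := (summable_prod_of_nonneg (f := fun q : (ℕ →₀ ℤ) × (ℕ →₀ ℤ) =>
      ‖f q.2 * g (q.1 - q.2)‖) (fun q => norm_nonneg _)).mp (summable_norm_shear hf hg)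
    refine Summable.of_nonneg_of_le (fun n => norm_nonneg _) (fun n => ?_) hsum.2
    exact norm_tsum_le_tsum_norm (inner_summable hf hg n)
  · intro n hn
    have h0 : ∀ m, f m * g (n - m) = 0 := by
      intro m
      by_cases hm : f m = 0
      · rw [hm, zero_mul]
      · have h1 := memS_of_ne_zero hf hm
        have h2 : tau (n - m) < 0 := by rw [tau_sub]; linarith
        rw [hg.2 _ h2, mul_zero]
    simp only [conv, h0, tsum_zero]

lemma charZ_top (lam : ℕ → Circle) (n : ℕ →₀ ℤ) :
    charZ ⊤ lam n = if n = 0 then 1 else 0 := if_pos rfl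

include hf hg in
lemma char_split (m u : ℕ →₀ ℤ) :
    f m * g u * charZ σ lam (m + u) = (f m * charZ σ lam m) * (g u * charZ σ lam u) := by
  by_cases hm : f m = 0
  · simp [hm]
  by_cases hu : g u = 0
  · simp [hu]
  by_cases hσ : σ = ⊤
  · subst hσ
    have h1 := memS_of_ne_zero hf hm
    have h2 := memS_of_ne_zero hg hu
    rw [charZ_top, charZ_top, charZ_top]
    by_cases hmu : m + u = 0
    · have htau : tau m + tau u = 0 := by rw [← tau_add, hmu, show tau 0 = 0 by simp [tau]]
      have hm0 : m = 0 := tau_eq_zero_imp (le_antisymm (by linarith) h1)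
      have hu0 : u = 0 := tau_eq_zero_imp (le_antisymm (by linarith) h2)
      rw [if_pos hmu, if_pos hm0, if_pos hu0]; ring
    · rw [if_neg hmu]
      have : ¬(m = 0) ∨ ¬(u = 0) := by
        by_contra h
        push_neg at h
        exact hmu (by rw [h.1, h.2, add_zero])
      rcases this with h | h
      · rw [if_neg h]; ring
      · rw [if_neg h]; ring
  · rw [charZ_mul σ hσ]; ring

include hf in
lemma summable_norm_mul_char : Summable fun n => ‖f n * charZ σ lam n‖ := by
  refine Summable.of_nonneg_of_le (fun n => norm_nonneg _) (fun n => ?_) hf.1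
  by_cases hn : f n = 0
  · simp [hn]
  · rw [norm_mul]
    calc ‖f n‖ * ‖charZ σ lam n‖ ≤ ‖f n‖ * 1 :=
          mul_le_mul_of_nonneg_left (norm_charZ_le_one σ lam (memS_of_ne_zero hf hn))
            (norm_nonneg _)
      _ = ‖f n‖ := mul_one _

include hf hg in
lemma conv_char_eq : (∑' n, conv f g n * charZ σ lam n) =
    (∑' n, f n * charZ σ lam n) * (∑' n, g n * charZ σ lam n) := by
  -- G over pairs q = (n, m): f m * g (n-m) * χ n
  set G : ((ℕ →₀ ℤ) × (ℕ →₀ ℤ)) → ℂ :=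
    fun q => f q.2 * g (q.1 - q.2) * charZ σ lam q.1 with hG
  have hbound : ∀ q, ‖G q‖ ≤ ‖f q.2 * g (q.1 - q.2)‖ := by
    intro q
    by_cases hm : f q.2 = 0
    · simp [hG, hm]
    by_cases hu : g (q.1 - q.2) = 0
    · simp [hG, hu]
    have h1 := memS_of_ne_zero hf hm
    have h2 := memS_of_ne_zero hg hu
    have h3 : 0 ≤ tau q.1 := by
      have := tau_sub q.1 q.2; nlinarith [h1, h2]
    rw [hG, norm_mul]
    calc ‖f q.2 * g (q.1 - q.2)‖ * ‖charZ σ lam q.1‖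
        ≤ ‖f q.2 * g (q.1 - q.2)‖ * 1 :=
          mul_le_mul_of_nonneg_left (norm_charZ_le_one σ lam h3) (norm_nonneg _)
      _ = _ := mul_one _
  have hGsummable : Summable G :=
    Summable.of_norm_bounded (summable_norm_shear hf hg) hbound
  have step1 : (∑' n, conv f g n * charZ σ lam n) = ∑' q, G q := by
    rw [Summable.tsum_prod' hGsummable (fun n => Summable.of_norm_bounded (inner_summable hf hg n) (fun m => hbound (n, m)))]
    refine tsum_congr fun n => ?_
    rw [conv, ← tsum_mul_right]
  have step2 : ∑' q, G q = ∑' p : ((ℕ →₀ ℤ) × (ℕ →₀ ℤ)), G (shear p) := (shear.tsum_eq G).symm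
  have step3 : ∀ p : ((ℕ →₀ ℤ) × (ℕ →₀ ℤ)),
      G (shear p) = (f p.1 * charZ σ lam p.1) * (g p.2 * charZ σ lam p.2) := by
    intro p
    have : G (shear p) = f p.1 * g p.2 * charZ σ lam (p.1 + p.2) := by
      simp [hG, shear, add_comm]
    rw [this, char_split hf hg σ lam]
  rw [step1, step2, tsum_congr step3,
    ← tsum_mul_tsum_of_summable_norm (summable_norm_mul_char hf σ lam)
      (summable_norm_mul_char hg σ lam)]

end Conv

open Classical in
noncomputable def delta (n : ℕ →₀ ℤ) : (ℕ →₀ ℤ) → ℂ := fun m => if m = n then 1 else 0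

lemma delta_self (n : ℕ →₀ ℤ) : delta n n = 1 := by simp [delta]

lemma delta_ne (n m : ℕ →₀ ℤ) (h : m ≠ n) : delta n m = 0 := by simp [delta, h]

lemma summable_norm_delta (n : ℕ →₀ ℤ) : Summable fun m => ‖delta n m‖ := by
  refine summable_of_ne_finset_zero (s := {n}) fun m hm => ?_
  rw [delta_ne n m (by simpa using hm), norm_zero]

lemma tsum_norm_delta (n : ℕ →₀ ℤ) : ∑' m, ‖delta n m‖ = 1 := by
  rw [tsum_eq_single n (fun m hm => by rw [delta_ne n m hm, norm_zero])]
  rw [delta_self, norm_one]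

lemma memL1S_delta {n : ℕ →₀ ℤ} (hn : 0 ≤ tau n) : MemL1S (delta n) :=
  ⟨summable_norm_delta n, fun m hm => delta_ne n m (fun h => by rw [h] at hm; linarith)⟩

lemma memL1S_zero : MemL1S (0 : (ℕ →₀ ℤ) → ℂ) := ⟨by simpa using summable_zero, fun _ _ => rfl⟩

lemma memL1S_add {f g : (ℕ →₀ ℤ) → ℂ} (hf : MemL1S f) (hg : MemL1S g) : MemL1S (f + g) := by
  refine ⟨?_, fun n hn => by simp [hf.2 n hn, hg.2 n hn]⟩
  refine Summable.of_nonneg_of_le (fun n => norm_nonneg _) (fun n => norm_add_le _ _)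
    (hf.1.add hg.1)

lemma memL1S_smul (c : ℂ) {f : (ℕ →₀ ℤ) → ℂ} (hf : MemL1S f) : MemL1S (c • f) := by
  refine ⟨?_, fun n hn => by simp [hf.2 n hn]⟩
  simpa [norm_smul] using hf.1.mul_left ‖c‖

lemma conv_delta (n m : ℕ →₀ ℤ) : conv (delta n) (delta m) = delta (n + m) := by
  funext x
  rw [conv, tsum_eq_single n (fun y hy => by rw [delta_ne n y hy, zero_mul])]
  rw [delta_self, one_mul]
  by_cases h : x = n + m
  · subst h
    rw [show n + m - n = m by abel, delta_self, delta_self]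
  · rw [delta_ne _ _ h, delta_ne _ _ (fun hc => h (by rw [← hc]; abel))]

section Phi
variable (phi : ((ℕ →₀ ℤ) → ℂ) → ℂ)
  (hadd : ∀ f g, MemL1S f → MemL1S g → phi (f + g) = phi f + phi g)
  (hsmul : ∀ (c : ℂ) (f), MemL1S f → phi (c • f) = c * phi f)
  (hbdd : ∀ f, MemL1S f → ‖phi f‖ ≤ ∑' n, ‖f n‖)

include hsmul in
lemma phi_zero : phi 0 = 0 := by
  have h := hsmul 0 0 memL1S_zero
  rw [zero_smul] at h
  rw [h, zero_mul]

include hsmul in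
lemma phi_term (f : (ℕ →₀ ℤ) → ℂ) (hf : MemL1S f) (m : ℕ →₀ ℤ) :
    phi (f m • delta m) = f m * phi (delta m) := by
  by_cases hm : 0 ≤ tau m
  · exact hsmul (f m) (delta m) (memL1S_delta hm)
  · have hfm : f m = 0 := hf.2 m (not_le.mp hm)
    rw [hfm, zero_smul, phi_zero phi hsmul, zero_mul]

lemma memL1S_term (f : (ℕ →₀ ℤ) → ℂ) (hf : MemL1S f) (m : ℕ →₀ ℤ) :
    MemL1S (f m • delta m) := by
  by_cases hm : 0 ≤ tau m
  · exact memL1S_smul _ (memL1S_delta hm)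
  · rw [hf.2 m (not_le.mp hm), zero_smul]; exact memL1S_zero

include hadd hsmul in
lemma phi_finsum (f : (ℕ →₀ ℤ) → ℂ) (hf : MemL1S f) (F : Finset (ℕ →₀ ℤ)) :
    MemL1S (∑ m ∈ F, f m • delta m) ∧
      phi (∑ m ∈ F, f m • delta m) = ∑ m ∈ F, f m * phi (delta m) := by
  classical
  induction F using Finset.cons_induction with
  | empty => simpa using ⟨memL1S_zero, phi_zero phi hsmul⟩
  | cons a F ha ih =>
    simp only [Finset.sum_cons]
    refine ⟨memL1S_add (memL1S_term f hf a) ih.1, ?_⟩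
    rw [hadd _ _ (memL1S_term f hf a) ih.1, ih.2, phi_term phi hsmul f hf a]

lemma finsum_delta_eq (f : (ℕ →₀ ℤ) → ℂ) (F : Finset (ℕ →₀ ℤ)) (x : ℕ →₀ ℤ) :
    (∑ m ∈ F, f m • delta m) x = if x ∈ F then f x else 0 := by
  classical
  rw [Finset.sum_apply]
  by_cases hx : x ∈ F
  · rw [if_pos hx]
    rw [Finset.sum_eq_single_of_mem x hx
      (fun m _ hm => by rw [Pi.smul_apply, delta_ne m x (Ne.symm hm), smul_zero])]
    rw [Pi.smul_apply, delta_self, smul_eq_mul, mul_one]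
  · rw [if_neg hx]
    refine Finset.sum_eq_zero fun m hm => ?_
    rw [Pi.smul_apply, delta_ne m x (fun h => hx (h ▸ hm)), smul_zero]

include hadd hsmul hbdd in
lemma phi_hasSum (f : (ℕ →₀ ℤ) → ℂ) (hf : MemL1S f) :
    HasSum (fun n => f n * phi (delta n)) (phi f) := by
  classical
  rw [HasSum, tendsto_iff_dist_tendsto_zero]
  have key : ∀ F : Finset (ℕ →₀ ℤ),
      dist (∑ m ∈ F, f m * phi (delta m)) (phi f) ≤ ∑' (x : {x // x ∉ F}), ‖f ↑x‖ := by
    intro F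
    set fF := ∑ m ∈ F, f m • delta m with hfF
    have h1 : MemL1S fF := (phi_finsum phi hadd hsmul f hf F).1
    have hrest : MemL1S (f - fF) := by
      constructor
      · refine Summable.of_nonneg_of_le (fun n => norm_nonneg _) (fun n => ?_) hf.1
        rw [Pi.sub_apply, hfF, finsum_delta_eq]
        by_cases hx : n ∈ F <;> simp [hx]
      · intro n hn
        rw [Pi.sub_apply, hfF, finsum_delta_eq, hf.2 n hn]
        simp
    have hsplit : phi f = phi fF + phi (f - fF) := by
      have : fF + (f - fF) = f := by ring
      rw [← hadd _ _ h1 hrest, this]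
    rw [dist_eq_norm, (phi_finsum phi hadd hsmul f hf F).2.symm, hsplit]
    have hnorm : ‖phi fF - (phi fF + phi (f - fF))‖ = ‖phi (f - fF)‖ := by
      rw [show phi fF - (phi fF + phi (f - fF)) = -(phi (f - fF)) by ring, norm_neg]
    rw [hnorm]
    refine le_trans (hbdd _ hrest) (le_of_eq ?_)
    have hsupp : Function.support (fun n => ‖(f - fF) n‖) ⊆ {x | x ∉ F} := by
      intro n hn
      simp only [Function.mem_support] at hn
      intro hnF
      apply hn
      rw [Pi.sub_apply, hfF, finsum_delta_eq, if_pos hnF, sub_self, norm_zero]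
    rw [← tsum_subtype_eq_of_support_subset hsupp]
    refine tsum_congr fun x => ?_
    rw [Pi.sub_apply, hfF, finsum_delta_eq, if_neg x.2, sub_zero]
  refine squeeze_zero (fun F => dist_nonneg) key ?_
  have hsum := hf.1.hasSum
  have heq : ∀ F : Finset (ℕ →₀ ℤ), ∑' (x : {x // x ∉ F}), ‖f ↑x‖ =
      (∑' n, ‖f n‖) - ∑ m ∈ F, ‖f m‖ := by
    intro F
    rw [eq_sub_iff_add_eq, add_comm]
    exact hf.1.sum_add_tsum_subtype_compl F
  simp only [heq]
  have h3 : Filter.Tendsto (fun F : Finset (ℕ →₀ ℤ) => ∑ m ∈ F, ‖f m‖)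
      Filter.atTop (nhds (∑' n, ‖f n‖)) := hsum
  simpa using (tendsto_const_nhds (x := ∑' n, ‖f n‖)
    (f := Filter.atTop (α := Finset (ℕ →₀ ℤ)))).sub h3

end Phi

lemma ratio_lemma {x y u v : ℝ} (hx : 0 < x) (hy : 0 < y) (hu : 0 ≤ u) (hv : 0 ≤ v)
    (h : ∀ a b : ℕ, (b:ℝ) * y ≤ (a:ℝ) * x → (b:ℝ) * v ≤ (a:ℝ) * u) : v / y ≤ u / x := by
  by_contra hcon
  push_neg at hcon
  have hvy : 0 < v := by
    rcases hv.lt_or_eq with h' | h'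
    · exact h'
    · exfalso
      rw [← h', zero_div] at hcon
      exact absurd (div_nonneg hu hx.le) (not_le.mpr hcon)
  have h1 : u / v < x / y := by
    rw [div_lt_div_iff₀ hx hy] at hcon
    rw [div_lt_div_iff₀ hvy hy]
    nlinarith
  obtain ⟨q, hq1, hq2⟩ := exists_rat_btwn h1
  have hq0 : 0 < q := by
    have : (0:ℝ) ≤ u / v := div_nonneg hu hvy.le
    exact_mod_cast lt_of_le_of_lt this hq1
  set a : ℕ := q.den with hA
  set b : ℕ := q.num.toNat with hB
  have hnum_pos : 0 < q.num := Rat.num_pos.mpr hq0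
  have ha_pos : 0 < (a:ℝ) := by exact_mod_cast q.pos
  have hb' : (b:ℝ) = (q.num : ℝ) := by
    rw [hB]; exact_mod_cast Int.toNat_of_nonneg hnum_pos.le
  have hcast : (q:ℝ) = (q.num:ℝ) / (q.den:ℝ) := by
    rw [Rat.cast_def]
  have hbqa : (b:ℝ) = (q:ℝ) * (a:ℝ) := by
    rw [hb', hcast, hA, div_mul_cancel₀]
    exact ha_pos.ne'
  have hyx : (b:ℝ) * y ≤ (a:ℝ) * x := by
    have h2 : (q:ℝ) * y < x := (lt_div_iff₀ hy).mp hq2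
    rw [hbqa]
    nlinarith
  have h3 := h a b hyx
  have h4 : u < (q:ℝ) * v := (div_lt_iff₀ hvy).mp hq1
  rw [hbqa] at h3
  nlinarith

theorem character_structure (c : (ℕ →₀ ℤ) → ℂ)
    (hbound : ∀ n, 0 ≤ tau n → ‖c n‖ ≤ 1)
    (hmulc : ∀ n m, 0 ≤ tau n → 0 ≤ tau m → c (n + m) = c n * c m)
    (hntz : ∃ n, 0 ≤ tau n ∧ c n ≠ 0) :
    ∃ (σ : ENNReal) (lam : ℕ → Circle), ∀ n, 0 ≤ tau n → c n = charZ σ lam n := by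
  classical
  obtain ⟨n₀, hn₀, hc₀⟩ := hntz
  have hone : c 0 = 1 := by
    have h := hmulc n₀ 0 hn₀ (le_of_eq tau_zero.symm)
    rw [add_zero] at h
    exact mul_left_cancel₀ hc₀ (h.symm.trans (mul_one (c n₀)).symm)
  have c_nsmul : ∀ n, 0 ≤ tau n → ∀ M : ℕ, c (M • n) = c n ^ M := by
    intro n hn M
    induction M with
    | zero => simpa using hone
    | succ M ih =>
      rw [succ_nsmul, hmulc _ _ (by rw [tau_nsmul]; exact mul_nonneg (Nat.cast_nonneg M) hn) hn,
        ih, pow_succ]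
  set z : ℕ → ℂ := fun k => c (Finsupp.single k 1) with hz_def
  have htau_single : ∀ k, tau (Finsupp.single k 1) = Real.log (Nat.nth Nat.Prime k) := by
    intro k; rw [tau_single]; push_cast; ring
  have htsk : ∀ k, 0 ≤ tau (Finsupp.single k 1) :=
    fun k => (htau_single k) ▸ (log_pk_pos k).le
  have hz_le : ∀ k, ‖z k‖ ≤ 1 := fun k => hbound _ (htsk k)
  have c_single_pow : ∀ (k : ℕ) (b : ℕ), c (b • Finsupp.single k 1) = z k ^ b :=
    fun k b => c_nsmul _ (htsk k) b
  -- key inequality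
  have hkey : ∀ j k : ℕ, ∀ a b : ℕ,
      (b:ℝ) * Real.log (Nat.nth Nat.Prime k) ≤ (a:ℝ) * Real.log (Nat.nth Nat.Prime j) →
      ‖z j‖ ^ a ≤ ‖z k‖ ^ b := by
    intro j k a b hab
    set m : ℕ →₀ ℤ := a • Finsupp.single j 1 - b • Finsupp.single k 1 with hm
    have htm : 0 ≤ tau m := by
      rw [hm, tau_sub, tau_nsmul, tau_nsmul, htau_single, htau_single]
      linarith
    have hsum : m + b • Finsupp.single k 1 = a • Finsupp.single j 1 := by
      rw [hm, sub_add_cancel]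
    have heq : c m * z k ^ b = z j ^ a := by
      rw [← c_single_pow k b, ← c_single_pow j a, ← hmulc m _ htm
        (by rw [tau_nsmul]; exact mul_nonneg (Nat.cast_nonneg b) (htsk k)), hsum]
    calc ‖z j‖ ^ a = ‖c m‖ * ‖z k‖ ^ b := by
          rw [← norm_pow, ← heq, norm_mul, norm_pow]
      _ ≤ 1 * ‖z k‖ ^ b := by
          refine mul_le_mul_of_nonneg_right (hbound m htm) (by positivity)
      _ = ‖z k‖ ^ b := one_mul _
  by_cases hcaseA : ∃ k, z k = 0
  · -- σ = ∞ case
    obtain ⟨k₀, hk₀⟩ := hcaseA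
    have hz0 : ∀ j, z j = 0 := by
      intro j
      set a : ℕ := Nat.nth Nat.Prime k₀ with hA
      have hle : (1:ℝ) * Real.log (Nat.nth Nat.Prime k₀) ≤
          (a:ℝ) * Real.log (Nat.nth Nat.Prime j) := by
        rw [one_mul, ← Real.log_pow]
        refine Real.log_le_log (pk_pos k₀) ?_
        calc (Nat.nth Nat.Prime k₀ : ℝ) ≤ (2:ℝ) ^ a := by
              exact_mod_cast (Nat.lt_two_pow_self (n := a)).le.trans (le_refl _)
          _ ≤ (Nat.nth Nat.Prime j : ℝ) ^ a := by
              refine pow_le_pow_left₀ (by norm_num) ?_ a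
              exact_mod_cast pk_two_le j
      have := hkey j k₀ a 1 (by push_cast; linarith)
      rw [hk₀, norm_zero, zero_pow one_ne_zero] at this
      have ha : a ≠ 0 := by
        have := pk_two_le k₀; omega
      have : ‖z j‖ ^ a = 0 := le_antisymm this (by positivity)
      have := pow_eq_zero_iff ha |>.mp this
      simpa using this
    refine ⟨⊤, fun _ => 1, fun n hn => ?_⟩
    rw [charZ_top]
    by_cases hn0 : n = 0
    · rw [if_pos hn0, hn0, hone]
    · rw [if_neg hn0]
      have htpos : 0 < tau n := lt_of_le_of_ne hn (fun h => hn0 (tau_eq_zero_imp h.symm))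
      obtain ⟨M, hM⟩ := exists_nat_ge (Real.log (Nat.nth Nat.Prime 0) / tau n)
      have hMt : Real.log (Nat.nth Nat.Prime 0) ≤ (M:ℝ) * tau n := by
        rw [div_le_iff₀ htpos] at hM; linarith
      have hM0 : M ≠ 0 := by
        rintro rfl
        rw [Nat.cast_zero, zero_mul] at hMt
        exact absurd hMt (not_le.mpr (log_pk_pos 0))
      set m : ℕ →₀ ℤ := M • n - Finsupp.single 0 1 with hm
      have htm : 0 ≤ tau m := by
        rw [hm, tau_sub, tau_nsmul, htau_single]; linarith
      have hsum : m + Finsupp.single 0 1 = M • n := by rw [hm, sub_add_cancel]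
      have : c n ^ M = c m * z 0 := by
        rw [← c_nsmul n hn M, ← hsum, hmulc m _ htm (htsk 0)]
      rw [hz0 0, mul_zero] at this
      exact pow_eq_zero_iff hM0 |>.mp this
  · -- finite σ case
    push_neg at hcaseA
    have hznorm_pos : ∀ k, 0 < ‖z k‖ := fun k => norm_pos_iff.mpr (hcaseA k)
    set u : ℕ → ℝ := fun k => -Real.log ‖z k‖ with hu_def
    have hu_nonneg : ∀ k, 0 ≤ u k := by
      intro k
      have := Real.log_nonpos (norm_nonneg _) (hz_le k)
      show 0 ≤ -Real.log ‖z k‖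
      linarith
    have hkey' : ∀ j k : ℕ, ∀ a b : ℕ,
        (b:ℝ) * Real.log (Nat.nth Nat.Prime k) ≤ (a:ℝ) * Real.log (Nat.nth Nat.Prime j) →
        (b:ℝ) * u k ≤ (a:ℝ) * u j := by
      intro j k a b hab
      have h1 := hkey j k a b hab
      have h2 : Real.log (‖z j‖ ^ a) ≤ Real.log (‖z k‖ ^ b) :=
        Real.log_le_log (pow_pos (hznorm_pos j) a) h1
      rw [Real.log_pow, Real.log_pow] at h2
      simp only [hu_def]
      nlinarith
    have hratio : ∀ j k : ℕ,
        u k / Real.log (Nat.nth Nat.Prime k) ≤ u j / Real.log (Nat.nth Nat.Prime j) :=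
      fun j k => ratio_lemma (log_pk_pos j) (log_pk_pos k) (hu_nonneg j) (hu_nonneg k)
        (hkey' j k)
    set σ' : ℝ := u 0 / Real.log (Nat.nth Nat.Prime 0) with hσ'
    have hσ'_eq : ∀ k, u k / Real.log (Nat.nth Nat.Prime k) = σ' :=
      fun k => le_antisymm (hratio 0 k) (hratio k 0)
    have hσ'_nonneg : 0 ≤ σ' := by
      rw [hσ']; exact div_nonneg (hu_nonneg 0) (log_pk_pos 0).le
    have hzk_eq : ∀ k, ‖z k‖ = (Nat.nth Nat.Prime k : ℝ) ^ (-σ') := by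
      intro k
      have h1 : u k = σ' * Real.log (Nat.nth Nat.Prime k) := by
        rw [← hσ'_eq k, div_mul_cancel₀ _ (log_pk_pos k).ne']
      rw [Real.rpow_def_of_pos (pk_pos k), ← Real.exp_log (hznorm_pos k)]
      congr 1
      have : Real.log ‖z k‖ = -(u k) := by simp [hu_def]
      rw [this, h1]; ring
    refine ⟨ENNReal.ofReal σ', fun k => show Circle from ⟨z k / (‖z k‖ : ℂ), ?_⟩, ?_⟩
    · rw [Submonoid.unitSphere, Submonoid.mem_mk, Subsemigroup.mem_mk]
      rw [mem_sphere_zero_iff_norm, norm_div, Complex.norm_real, Real.norm_eq_abs,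
        abs_of_pos (hznorm_pos k), div_self (hznorm_pos k).ne']
    intro n hn
    have hσtop : ENNReal.ofReal σ' ≠ ⊤ := ENNReal.ofReal_ne_top
    have hσtoReal : (ENNReal.ofReal σ').toReal = σ' := ENNReal.toReal_ofReal hσ'_nonneg
    have hwgt : ∀ k, wgt (ENNReal.ofReal σ')
        (fun k => show Circle from ⟨z k / (‖z k‖ : ℂ), by
          rw [Submonoid.unitSphere, Submonoid.mem_mk, Subsemigroup.mem_mk]
          rw [mem_sphere_zero_iff_norm, norm_div, Complex.norm_real, Real.norm_eq_abs,
            abs_of_pos (hznorm_pos k), div_self (hznorm_pos k).ne']⟩) k = z k := by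
      intro k
      rw [wgt]
      show ((((Nat.nth Nat.Prime k : ℝ) ^ (-(ENNReal.ofReal σ').toReal) : ℝ) : ℂ) *
        (z k / (‖z k‖ : ℂ))) = z k
      rw [hσtoReal, ← hzk_eq k]
      have habs : ((‖z k‖ : ℝ) : ℂ) ≠ 0 := by
        exact_mod_cast (hznorm_pos k).ne'
      rw [mul_div_assoc']
      exact mul_div_cancel_left₀ _ habs
    rw [charZ_of_ne_top _ hσtop]
    have hprod_w : ∀ m : ℕ →₀ ℤ, (∏ k ∈ m.support, (wgt (ENNReal.ofReal σ')
        (fun k => show Circle from ⟨z k / (‖z k‖ : ℂ), by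
          rw [Submonoid.unitSphere, Submonoid.mem_mk, Subsemigroup.mem_mk]
          rw [mem_sphere_zero_iff_norm, norm_div, Complex.norm_real, Real.norm_eq_abs,
            abs_of_pos (hznorm_pos k), div_self (hznorm_pos k).ne']⟩) k) ^ (m k)) =
        ∏ k ∈ m.support, (z k) ^ (m k) := by
      intro m
      exact Finset.prod_congr rfl fun k _ => by rw [hwgt k]
    rw [hprod_w]
    -- now prove c n = ∏ z^n for n ∈ S
    clear hprod_w hwgt
    -- step 1: nonneg case by strong induction
    have step : ∀ N : ℕ, ∀ m : ℕ →₀ ℤ, (∀ k, 0 ≤ m k) →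
        (∑ k ∈ m.support, (m k).toNat) ≤ N →
        c m = ∏ k ∈ m.support, (z k) ^ (m k) := by
      intro N
      induction N with
      | zero =>
        intro m hm hN
        have hm0 : m = 0 := by
          ext k
          by_cases hk : k ∈ m.support
          · exfalso
            have h1 := Finsupp.mem_support_iff.mp hk
            have h2 : (m k).toNat ≤ ∑ j ∈ m.support, (m j).toNat :=
              Finset.single_le_sum (f := fun j => (m j).toNat) (fun j _ => Nat.zero_le _) hk
            have h3 := hm k
            omega
          · simpa using Finsupp.notMem_support_iff.mp hk
        rw [hm0, hone]
        simp
      | succ N ih =>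
        intro m hm hN
        by_cases hm0 : m = 0
        · rw [hm0, hone]; simp
        obtain ⟨k, hk⟩ := Finsupp.support_nonempty_iff.mpr hm0
        have hmk : 1 ≤ m k := by
          have := Finsupp.mem_support_iff.mp hk
          have := hm k
          omega
        set m' : ℕ →₀ ℤ := m - Finsupp.single k 1 with hm'
        have hm'_app : ∀ j, m' j = m j - (if k = j then 1 else 0) := by
          intro j
          rw [hm', Finsupp.sub_apply, Finsupp.single_apply]
        have hm'_nonneg : ∀ j, 0 ≤ m' j := by
          intro j
          rw [hm'_app]
          by_cases hjk : k = j
          · subst hjk; simpa using hmk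
          · rw [if_neg hjk]; simpa using hm j
        have hsupp_sub : m'.support ⊆ m.support := by
          intro j hj
          have h1 := Finsupp.mem_support_iff.mp hj
          rw [hm'_app] at h1
          rw [Finsupp.mem_support_iff]
          by_cases hjk : k = j
          · subst hjk; omega
          · rw [if_neg hjk] at h1; simpa using h1
        have hmeasure : (∑ j ∈ m'.support, (m' j).toNat) ≤ N := by
          have he1 : (∑ j ∈ m'.support, (m' j).toNat) = ∑ j ∈ m.support, (m' j).toNat := by
            refine Finset.sum_subset hsupp_sub fun j _ hj => ?_
            rw [Finsupp.notMem_support_iff.mp hj]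
            rfl
          have he2 : ∑ j ∈ m.support, (m' j).toNat =
              ∑ j ∈ m.support \ {k}, (m' j).toNat + (m' k).toNat :=
            Finset.sum_eq_sum_sdiff_singleton_add hk _
          have he3 : ∑ j ∈ m.support, (m j).toNat =
              ∑ j ∈ m.support \ {k}, (m j).toNat + (m k).toNat :=
            Finset.sum_eq_sum_sdiff_singleton_add hk _
          have he4 : ∑ j ∈ m.support \ {k}, (m' j).toNat =
              ∑ j ∈ m.support \ {k}, (m j).toNat := by
            refine Finset.sum_congr rfl fun j hj => ?_
            have hjk : j ≠ k := by
              intro h; subst h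
              exact absurd hj (by simp)
            rw [hm'_app, if_neg (fun h => hjk h.symm), sub_zero]
          have he5 : (m' k).toNat + 1 = (m k).toNat := by
            rw [hm'_app, if_pos rfl]
            omega
          rw [he3] at hN
          omega
        have hsum : m' + Finsupp.single k 1 = m := by rw [hm', sub_add_cancel]
        have hcm : c m = c m' * z k := by
          rw [← hsum, hmulc m' _ (tau_nonneg_of_nonneg hm'_nonneg) (htsk k)]
        have hprod : ∏ j ∈ m.support, z j ^ (m j) =
            (∏ j ∈ m'.support, z j ^ (m' j)) * z k := by
          rw [← hsum, prodpow_add z hcaseA]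
          congr 1
          rw [Finsupp.support_single_ne_zero k one_ne_zero]
          simp
        rw [hcm, hprod, ih m' hm'_nonneg hmeasure]
    -- step 2: general case
    set np : ℕ →₀ ℤ := n.mapRange (fun x => max x 0) (by simp) with hnp
    set nn : ℕ →₀ ℤ := np - n with hnn
    have hnp_app : ∀ j, np j = max (n j) 0 := fun j => Finsupp.mapRange_apply
    have hnp_nonneg : ∀ j, 0 ≤ np j := fun j => by rw [hnp_app]; omega
    have hnn_nonneg : ∀ j, 0 ≤ nn j := by
      intro j
      rw [hnn, Finsupp.sub_apply, hnp_app]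
      omega
    have hsum : n + nn = np := by rw [hnn]; abel
    have hcnp : c np = c n * c nn := by
      rw [← hsum, hmulc n nn hn (tau_nonneg_of_nonneg hnn_nonneg)]
    have hpnp : c np = ∏ j ∈ np.support, z j ^ (np j) :=
      step _ np hnp_nonneg (le_refl _)
    have hpnn : c nn = ∏ j ∈ nn.support, z j ^ (nn j) :=
      step _ nn hnn_nonneg (le_refl _)
    have hprodsplit : ∏ j ∈ np.support, z j ^ (np j) =
        (∏ j ∈ n.support, z j ^ (n j)) * ∏ j ∈ nn.support, z j ^ (nn j) := by
      rw [← hsum, prodpow_add z hcaseA]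
    have hnn_ne : (∏ j ∈ nn.support, z j ^ (nn j)) ≠ 0 := by
      refine Finset.prod_ne_zero_iff.mpr fun j _ => zpow_ne_zero _ (hcaseA j)
    have : c n * c nn = (∏ j ∈ n.support, z j ^ (n j)) * ∏ j ∈ nn.support, z j ^ (nn j) := by
      rw [← hcnp, hpnp, hprodsplit]
    rw [hpnn] at this
    exact mul_right_cancel₀ hnn_ne this

/-- Every (bounded, nonzero) multiplicative linear functional on the convolution Banach
algebra `ℓ¹(S)` is of the form `f ↦ ∑_{n∈S} f(n) z^n` with `z^n = ∏ₖ (pₖ^{−σ}λₖ)^{nₖ}` for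
some `σ ∈ [0,∞]`, `λ ∈ 𝕋^ω`; and conversely each such formula is multiplicative. -/
theorem characters_of_l1_semigroup :
    (∀ φ : ((ℕ →₀ ℤ) → ℂ) → ℂ,
      (∀ f g, MemL1S f → MemL1S g → φ (f + g) = φ f + φ g) →
      (∀ (c : ℂ) (f), MemL1S f → φ (c • f) = c * φ f) →
      (∀ f, MemL1S f → ‖φ f‖ ≤ ∑' n, ‖f n‖) →
      (∀ f g, MemL1S f → MemL1S g → φ (conv f g) = φ f * φ g) →
      (∃ f, MemL1S f ∧ φ f ≠ 0) →
      ∃ (σ : ENNReal) (lam : ℕ → Circle), ∀ f, MemL1S f →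
        φ f = ∑' n, f n * charZ σ lam n) ∧
    (∀ (σ : ENNReal) (lam : ℕ → Circle) (f g : (ℕ →₀ ℤ) → ℂ),
      MemL1S f → MemL1S g →
      MemL1S (conv f g) ∧
        (∑' n, conv f g n * charZ σ lam n) =
          (∑' n, f n * charZ σ lam n) * (∑' n, g n * charZ σ lam n)) := by
  constructor
  · -- forward direction
    intro φ hadd hsmul hbdd hmul hne
    have hHasSum := phi_hasSum φ hadd hsmul hbdd
    have hcmul : ∀ n m : ℕ →₀ ℤ, 0 ≤ tau n → 0 ≤ tau m →
        φ (delta (n + m)) = φ (delta n) * φ (delta m) := by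
      intro n m hn hm
      rw [← conv_delta, hmul _ _ (memL1S_delta hn) (memL1S_delta hm)]
    have hcbdd : ∀ n, 0 ≤ tau n → ‖φ (delta n)‖ ≤ 1 := by
      intro n hn
      have := hbdd _ (memL1S_delta hn)
      rwa [tsum_norm_delta] at this
    have hntz : ∃ n, 0 ≤ tau n ∧ φ (delta n) ≠ 0 := by
      obtain ⟨f, hf, hfne⟩ := hne
      by_contra hcon
      push_neg at hcon
      apply hfne
      have hterm : ∀ n, f n * φ (delta n) = 0 := by
        intro n
        by_cases h : 0 ≤ tau n
        · rw [hcon n h, mul_zero]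
        · rw [hf.2 n (not_le.mp h), zero_mul]
      rw [← (hHasSum f hf).tsum_eq]
      simp only [hterm, tsum_zero]
    obtain ⟨σ, lam, hchar⟩ :=
      character_structure (fun n => φ (delta n)) hcbdd hcmul hntz
    refine ⟨σ, lam, fun f hf => ?_⟩
    rw [← (hHasSum f hf).tsum_eq]
    refine tsum_congr fun n => ?_
    by_cases h : 0 ≤ tau n
    · rw [hchar n h]
    · rw [hf.2 n (not_le.mp h), zero_mul, zero_mul]
  · -- converse direction
    intro σ lam f g hf hg
    exact ⟨memL1S_conv hf hg, conv_char_eq hf hg σ lam⟩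
end

section
/- Suppose f ∈ H²_τ(𝕋^ω) (i.e., f ∈ L²(𝕋^ω) with supp(f̂) ⊆ {n : τ(n) ≥ 0}) is such that there exist trigonometric polynomials p_k with supp(p̂_k) ⊆ ℤ^∞_+ (the cone with all coordinates ≥ 0) and p_k f → f̂(0)·1 in L², with f̂(0) ≠ 0 and p̂_k(0) = 1. Then supp(f̂) ⊆ ℤ^∞_+. -/
open MeasureTheory Filter

noncomputable instance : MeasurableSpace Circle := borel Circle
instance : BorelSpace Circle := ⟨rfl⟩

/-- The character of `𝕋^ω` attached to `n ∈ ℤ^∞`. -/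
noncomputable def charG (n : ℕ →₀ ℤ) (lam : ℕ → Circle) : ℂ :=
  ∏ k ∈ n.support, ((lam k : ℂ)) ^ (n k)

/-- Fourier coefficient `f̂(n)` of `f : 𝕋^ω → ℂ` w.r.t. the Haar probability measure. -/
noncomputable def coeff (μ : Measure (ℕ → Circle)) (f : (ℕ → Circle) → ℂ)
    (n : ℕ →₀ ℤ) : ℂ :=
  ∫ lam, f lam * (starRingEnd ℂ) (charG n lam) ∂μ

/-! ### Auxiliary lemmas -/

lemma Circle.coe_zpow' (z : Circle) (m : ℤ) : ((z ^ m : Circle) : ℂ) = (z : ℂ) ^ m :=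
  map_zpow' Circle.coeHom Circle.coe_inv z m

lemma charG_eq_prod (n : ℕ →₀ ℤ) (lam : ℕ → Circle) :
    charG n lam = n.prod fun k m => (lam k : ℂ) ^ m := rfl

lemma charG_zero (lam : ℕ → Circle) : charG (0 : ℕ →₀ ℤ) lam = 1 := by
  simp [charG]

lemma charG_add (n m : ℕ →₀ ℤ) (lam : ℕ → Circle) :
    charG (n + m) lam = charG n lam * charG m lam := by
  rw [charG_eq_prod, charG_eq_prod, charG_eq_prod]
  exact Finsupp.prod_add_index' (fun k => zpow_zero _)
    (fun k a b => zpow_add₀ (Circle.coe_ne_zero _) a b)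

lemma norm_charG (n : ℕ →₀ ℤ) (lam : ℕ → Circle) : ‖charG n lam‖ = 1 := by
  rw [charG]
  rw [norm_prod]
  apply Finset.prod_eq_one
  intro k _
  rw [norm_zpow]
  rw [Circle.norm_coe, one_zpow]

lemma abs_charG (n : ℕ →₀ ℤ) (lam : ℕ → Circle) : ‖charG n lam‖ = 1 :=
  norm_charG n lam

lemma charG_ne_zero (n : ℕ →₀ ℤ) (lam : ℕ → Circle) : charG n lam ≠ 0 := by
  intro h
  have := norm_charG n lam
  rw [h] at this
  simp at this

lemma charG_neg (n : ℕ →₀ ℤ) (lam : ℕ → Circle) :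
    charG (-n) lam = (charG n lam)⁻¹ := by
  have h : charG (-n) lam * charG n lam = 1 := by
    rw [← charG_add]
    simp [charG_zero]
  exact eq_inv_of_mul_eq_one_left h

lemma conj_charG (n : ℕ →₀ ℤ) (lam : ℕ → Circle) :
    (starRingEnd ℂ) (charG n lam) = charG (-n) lam := by
  rw [charG_neg, Complex.inv_eq_conj (abs_charG n lam)]

lemma continuous_charG (n : ℕ →₀ ℤ) : Continuous (charG n) := by
  unfold charG
  apply continuous_finset_prod
  intro k _
  have h1 : Continuous fun lam : ℕ → Circle => ((lam k) ^ (n k) : Circle) :=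
    (continuous_apply k).zpow _
  have h2 : Continuous fun lam : ℕ → Circle => (((lam k) ^ (n k) : Circle) : ℂ) :=
    continuous_subtype_val.comp h1
  simpa only [Circle.coe_zpow'] using h2

lemma charG_mul_arg (n : ℕ →₀ ℤ) (t lam : ℕ → Circle) :
    charG n (t * lam) = charG n t * charG n lam := by
  unfold charG
  rw [← Finset.prod_mul_distrib]
  apply Finset.prod_congr rfl
  intro k _
  have : ((t * lam) k : ℂ) = (t k : ℂ) * (lam k : ℂ) := rfl
  rw [this, mul_zpow]

lemma integrable_mul_charG {μ : Measure (ℕ → Circle)} [IsProbabilityMeasure μ]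
    {f : (ℕ → Circle) → ℂ} (hfi : Integrable f μ) (n : ℕ →₀ ℤ) :
    Integrable (fun lam => f lam * charG n lam) μ := by
  have := hfi.bdd_mul (continuous_charG n).aestronglyMeasurable
    (c := 1) (Eventually.of_forall fun x => le_of_eq (norm_charG n x))
  simpa [mul_comm] using this

lemma integral_charG (μ : Measure (ℕ → Circle)) [μ.IsHaarMeasure] [IsProbabilityMeasure μ]
    (n : ℕ →₀ ℤ) :
    ∫ lam, charG n lam ∂μ = if n = 0 then 1 else 0 := by
  split_ifs with h
  · subst h
    simp [charG_zero]
  · obtain ⟨k, hk⟩ : ∃ k, n k ≠ 0 := by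
      by_contra h'
      push_neg at h'
      exact h (Finsupp.ext h')
    set c : Circle := Circle.exp (Real.pi / (n k)) with hc
    set t : ℕ → Circle := fun j => if j = k then c else 1 with htdef
    have hck : (c : ℂ) ^ (n k) = -1 := by
      rw [hc, Circle.coe_exp, ← Complex.exp_int_mul]
      rw [show ((n k : ℂ) * ((Real.pi / (n k) : ℝ) * Complex.I)) = Real.pi * Complex.I by
        push_cast
        have : (n k : ℂ) ≠ 0 := Int.cast_ne_zero.mpr hk
        field_simp]
      exact Complex.exp_pi_mul_I
    have hkmem : k ∈ n.support := Finsupp.mem_support_iff.mpr hk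
    have ht : charG n t = -1 := by
      unfold charG
      rw [Finset.prod_eq_single k]
      · rw [htdef]; simp [hck]
      · intro j _ hj
        rw [htdef]
        simp [hj]
      · intro hh
        exact absurd hkmem hh
    have hinv := integral_mul_left_eq_self (fun lam => charG n lam) t (μ := μ)
    have heq : ∫ lam, charG n (t * lam) ∂μ = charG n t * ∫ lam, charG n lam ∂μ := by
      simp_rw [charG_mul_arg]
      exact integral_const_mul _ _
    rw [heq, ht] at hinv
    have : (2 : ℂ) * ∫ lam, charG n lam ∂μ = 0 := by linear_combination -hinv
    simpa using this

lemma continuous_qpoly (s : Finset (ℕ →₀ ℤ)) (a : (ℕ →₀ ℤ) → ℂ) :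
    Continuous (fun lam => ∑ n ∈ s, a n * charG n lam) := by
  apply continuous_finset_sum
  intro n _
  exact continuous_const.mul (continuous_charG n)

/-- If `f ∈ H²_τ(𝕋^ω)` admits trigonometric polynomials `q_j` with spectrum in the cone
`ℤ^∞₊`, `q̂_j(0) = 1`, such that `q_j f → f̂(0)·1` in `L²`, and `f̂(0) ≠ 0`, then
`supp f̂ ⊆ ℤ^∞₊`. -/
theorem support_in_positive_cone
    (μ : Measure (ℕ → Circle)) [μ.IsHaarMeasure] [IsProbabilityMeasure μ]
    (f : (ℕ → Circle) → ℂ) (hf : MemLp f 2 μ)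
    (hsupp : ∀ n : ℕ →₀ ℤ, tau n < 0 → coeff μ f n = 0)
    (h0 : coeff μ f 0 ≠ 0)
    (q : ℕ → (ℕ → Circle) → ℂ)
    (hq : ∀ j, ∃ (s : Finset (ℕ →₀ ℤ)) (a : (ℕ →₀ ℤ) → ℂ),
      (∀ n ∈ s, ∀ k, 0 ≤ n k) ∧ q j = fun lam => ∑ n ∈ s, a n * charG n lam)
    (hq0 : ∀ j, coeff μ (q j) 0 = 1)
    (hconv : Tendsto
      (fun j => eLpNorm (fun lam => q j lam * f lam - coeff μ f 0) 2 μ) atTop (nhds 0)) :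
    ∀ n : ℕ →₀ ℤ, coeff μ f n ≠ 0 → ∀ k, 0 ≤ n k := by
  have hfi : Integrable f μ :=
    memLp_one_iff_integrable.mp (hf.mono_exponent (by norm_num))
  -- τ is additive
  have tau_add : ∀ a b : ℕ →₀ ℤ, tau (a + b) = tau a + tau b := by
    intro a b
    exact Finsupp.sum_add_index' (fun k => by simp) (fun k b₁ b₂ => by push_cast; ring)
  -- nonzero positive elements have τ ≥ log 2
  have tau_ge : ∀ m : ℕ →₀ ℤ, (∀ k, 0 ≤ m k) → m ≠ 0 → Real.log 2 ≤ tau m := by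
    intro m hm hm0
    obtain ⟨k, hk⟩ : ∃ k, m k ≠ 0 := by
      by_contra h'
      push_neg at h'
      exact hm0 (Finsupp.ext h')
    have hk1 : (1 : ℤ) ≤ m k := by have := hm k; omega
    have hp1 : (1 : ℝ) ≤ (Nat.nth Nat.Prime k : ℝ) := by
      exact_mod_cast (Nat.prime_nth_prime k).one_lt.le
    have hlognn : 0 ≤ Real.log (Nat.nth Nat.Prime k) := Real.log_nonneg hp1
    have hterm : Real.log 2 ≤ (m k : ℝ) * Real.log (Nat.nth Nat.Prime k) := by
      have h2 : Real.log 2 ≤ Real.log (Nat.nth Nat.Prime k) := by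
        rw [Real.log_le_log_iff (by norm_num)
          (by exact_mod_cast (Nat.prime_nth_prime k).pos)]
        exact_mod_cast (Nat.prime_nth_prime k).two_le
      calc Real.log 2 ≤ Real.log (Nat.nth Nat.Prime k) := h2
        _ = 1 * Real.log (Nat.nth Nat.Prime k) := (one_mul _).symm
        _ ≤ (m k : ℝ) * Real.log (Nat.nth Nat.Prime k) := by
            apply mul_le_mul_of_nonneg_right _ hlognn
            exact_mod_cast hk1
    refine hterm.trans ?_
    unfold tau Finsupp.sum
    refine Finset.single_le_sum (f := fun i => (m i : ℝ) * Real.log (Nat.nth Nat.Prime i))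
      (fun i _ => ?_) (Finsupp.mem_support_iff.mpr hk)
    have := hm i
    have h0i : (0 : ℝ) ≤ (m i : ℝ) := by exact_mod_cast this
    exact mul_nonneg h0i (Real.log_nonneg (by exact_mod_cast (Nat.prime_nth_prime i).one_lt.le))
  -- suppose not
  by_contra hcon
  push_neg at hcon
  obtain ⟨n₁, hn₁, k₁, hk₁⟩ := hcon
  set Bad : Set (ℕ →₀ ℤ) := {n | coeff μ f n ≠ 0 ∧ ∃ k, n k < 0} with hBadDef
  have hn₁Bad : n₁ ∈ Bad := ⟨hn₁, k₁, by omega⟩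
  set T : Set ℝ := tau '' Bad with hTdef
  have hTne : T.Nonempty := ⟨tau n₁, n₁, hn₁Bad, rfl⟩
  have hTbd : ∀ x ∈ T, (0:ℝ) ≤ x := by
    rintro x ⟨n, hn, rfl⟩
    by_contra hx
    exact hn.1 (hsupp n (lt_of_not_ge hx))
  obtain ⟨x₀, hx₀T, hx₀lt⟩ := Real.lt_sInf_add_pos hTne (Real.log_pos one_lt_two)
  obtain ⟨n₀, hn₀Bad, rfl⟩ := hx₀T
  have hn₀ne : coeff μ f n₀ ≠ 0 := hn₀Bad.1
  obtain ⟨kneg, hkneg⟩ := hn₀Bad.2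
  have hn₀0 : n₀ ≠ 0 := by
    intro h
    rw [h] at hkneg
    simp at hkneg
  -- key vanishing
  have key : ∀ m : ℕ →₀ ℤ, (∀ k, 0 ≤ m k) → m ≠ 0 → coeff μ f (n₀ - m) = 0 := by
    intro m hm hm0
    by_contra hc
    have htau : tau (n₀ - m) = tau n₀ - tau m := by
      have h := tau_add (n₀ - m) m
      rw [sub_add_cancel] at h
      linarith
    by_cases hcone : ∀ k, 0 ≤ (n₀ - m) k
    · have h1 := hcone kneg
      have h2 := hm kneg
      rw [Finsupp.sub_apply] at h1
      omega
    · push_neg at hcone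
      obtain ⟨k, hk⟩ := hcone
      have hmem : tau (n₀ - m) ∈ T := ⟨n₀ - m, ⟨hc, k, hk⟩, rfl⟩
      have h1 : sInf T ≤ tau (n₀ - m) := csInf_le ⟨0, hTbd⟩ hmem
      have h2 := tau_ge m hm hm0
      linarith
  -- coefficient computation
  have hcoe : ∀ j, coeff μ (fun lam => q j lam * f lam - coeff μ f 0) n₀ = coeff μ f n₀ := by
    intro j
    obtain ⟨s, a, hpos, hqeq⟩ := hq j
    -- first: a 0 = 1 and 0 ∈ s, from hq0
    have hq0j := hq0 j
    have hq0eq : coeff μ (q j) 0 = if (0 : ℕ →₀ ℤ) ∈ s then a 0 else 0 := by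
      unfold coeff
      rw [hqeq]
      have hpt : ∀ lam, (∑ n ∈ s, a n * charG n lam) * (starRingEnd ℂ) (charG 0 lam)
          = ∑ n ∈ s, a n * charG n lam := by
        intro lam
        rw [charG_zero]
        simp
      simp_rw [hpt]
      rw [integral_finset_sum]
      · have : ∀ n ∈ s, ∫ lam, a n * charG n lam ∂μ = a n * (if n = 0 then 1 else 0) := by
          intro n _
          rw [integral_const_mul, integral_charG]
        rw [Finset.sum_congr rfl this]
        simp_rw [mul_ite, mul_one, mul_zero]
        rw [Finset.sum_ite_eq' s 0 (fun n => a n)]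
      · intro n _
        have := integrable_mul_charG (μ := μ) (integrable_const (a n)) n
        simpa using this
    rw [hq0eq] at hq0j
    by_cases h0s : (0 : ℕ →₀ ℤ) ∈ s
    swap
    · rw [if_neg h0s] at hq0j; exact absurd hq0j.symm one_ne_zero
    rw [if_pos h0s] at hq0j
    -- integrability pieces
    have hintterm : ∀ m : ℕ →₀ ℤ,
        Integrable (fun lam => a m * (f lam * (starRingEnd ℂ) (charG (n₀ - m) lam))) μ := by
      intro m
      have : Integrable (fun lam => f lam * charG (-(n₀ - m)) lam) μ :=
        integrable_mul_charG hfi _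
      refine (Integrable.const_mul ?_ (a m))
      simpa [conj_charG] using this
    -- pointwise expansion
    have hpt : ∀ lam, (q j lam * f lam) * (starRingEnd ℂ) (charG n₀ lam)
        = ∑ m ∈ s, a m * (f lam * (starRingEnd ℂ) (charG (n₀ - m) lam)) := by
      intro lam
      rw [hqeq]
      rw [Finset.sum_mul, Finset.sum_mul]
      apply Finset.sum_congr rfl
      intro m _
      have hcc : charG m lam * (starRingEnd ℂ) (charG n₀ lam)
          = (starRingEnd ℂ) (charG (n₀ - m) lam) := by
        rw [conj_charG, conj_charG, show -(n₀ - m) = m + -n₀ by abel, charG_add]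
      calc a m * charG m lam * f lam * (starRingEnd ℂ) (charG n₀ lam)
          = a m * (f lam * (charG m lam * (starRingEnd ℂ) (charG n₀ lam))) := by ring
        _ = a m * (f lam * (starRingEnd ℂ) (charG (n₀ - m) lam)) := by rw [hcc]
    -- coefficient of q j * f at n₀
    have hA : (∫ lam, (q j lam * f lam) * (starRingEnd ℂ) (charG n₀ lam) ∂μ)
        = coeff μ f n₀ := by
      simp_rw [hpt]
      rw [integral_finset_sum _ (fun m _ => hintterm m)]
      have hterm : ∀ m ∈ s, (∫ lam, a m * (f lam * (starRingEnd ℂ) (charG (n₀ - m) lam)) ∂μ)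
          = a m * coeff μ f (n₀ - m) := by
        intro m _
        rw [integral_const_mul]
        rfl
      rw [Finset.sum_congr rfl hterm]
      rw [Finset.sum_eq_single (0 : ℕ →₀ ℤ)]
      · rw [hq0j, sub_zero, one_mul]
      · intro m hms hm0
        rw [key m (hpos m hms) hm0, mul_zero]
      · intro h; exact absurd h0s h
    -- coefficient of the constant at n₀
    have hB : (∫ lam, (coeff μ f 0) * (starRingEnd ℂ) (charG n₀ lam) ∂μ) = 0 := by
      rw [integral_const_mul]
      have : ∀ lam, (starRingEnd ℂ) (charG n₀ lam) = charG (-n₀) lam := fun lam =>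
        conj_charG n₀ lam
      simp_rw [this]
      rw [integral_charG, if_neg (by simpa using hn₀0), mul_zero]
    -- combine
    rw [coeff]
    have hptsub : ∀ lam, (q j lam * f lam - coeff μ f 0) * (starRingEnd ℂ) (charG n₀ lam)
        = (q j lam * f lam) * (starRingEnd ℂ) (charG n₀ lam)
          - (coeff μ f 0) * (starRingEnd ℂ) (charG n₀ lam) := by
      intro lam; ring
    simp_rw [hptsub]
    rw [integral_sub, hA, hB, sub_zero]
    · -- Integrable (q j f * conj charG n₀)
      have : Integrable (fun lam => ∑ m ∈ s,
          a m * (f lam * (starRingEnd ℂ) (charG (n₀ - m) lam))) μ :=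
        integrable_finset_sum _ (fun m _ => hintterm m)
      apply this.congr
      filter_upwards with lam
      exact (hpt lam).symm
    · have := integrable_mul_charG (μ := μ) (integrable_const (coeff μ f 0)) (-n₀)
      apply this.congr
      filter_upwards with lam
      rw [conj_charG]
  -- the bound and the limit
  have hbound : ∀ j, (‖coeff μ f n₀‖₊ : ENNReal)
      ≤ eLpNorm (fun lam => q j lam * f lam - coeff μ f 0) 2 μ := by
    intro j
    set g : (ℕ → Circle) → ℂ := fun lam => q j lam * f lam - coeff μ f 0 with hgdef
    have hgm : AEStronglyMeasurable g μ := by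
      obtain ⟨s, a, hpos, hqeq⟩ := hq j
      have hqc : Continuous (q j) := by rw [hqeq]; exact continuous_qpoly s a
      exact ((hqc.aestronglyMeasurable.mul hf.1).sub aestronglyMeasurable_const)
    rw [← hcoe j]
    calc (‖coeff μ g n₀‖₊ : ENNReal)
        ≤ ∫⁻ lam, ‖g lam * (starRingEnd ℂ) (charG n₀ lam)‖₊ ∂μ :=
          enorm_integral_le_lintegral_enorm _
      _ = ∫⁻ lam, ‖g lam‖₊ ∂μ := by
          apply lintegral_congr
          intro lam
          rw [nnnorm_mul]
          have h2 : ‖(starRingEnd ℂ) (charG n₀ lam)‖₊ = 1 := by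
            rw [RCLike.nnnorm_conj]
            exact NNReal.coe_injective (by simp [coe_nnnorm, abs_charG])
          rw [h2, mul_one]
      _ = eLpNorm g 1 μ := by rw [eLpNorm_one_eq_lintegral_enorm]; rfl
      _ ≤ eLpNorm g 2 μ := eLpNorm_le_eLpNorm_of_exponent_le (by norm_num) hgm
  have hle : (‖coeff μ f n₀‖₊ : ENNReal) ≤ 0 := ge_of_tendsto' hconv hbound
  have : coeff μ f n₀ = 0 := by
    simpa using hle
  exact hn₀ne this
end
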